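/- For every integer n ≥ 1, the packing number of C_3 □ P_n equals ⌈n/2⌉. -/

import Mathlib

open SimpleGraph Finset
open scoped Classical

/-- Closed neighborhood of a vertex. -/
def closedNbr {V : Type*} (G : SimpleGraph V) (v : V) : Set V :=
  insert v (G.neighborSet v)

/-- `S` is an efficient dominating set: every vertex lies in the closed
neighborhood of exactly one vertex of `S`. -/
def IsEffDomSet {V : Type*} (G : SimpleGraph V) (S : Set V) : Prop :=
  ∀ v : V, ∃! u, u ∈ S ∧ v ∈ closedNbr G u

/-- `S` is a dominating set. -/
def IsDomSet {V : Type*} (G : SimpleGraph V) (S : Set V) : Prop :=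
  ∀ v : V, v ∉ S → ∃ u ∈ S, G.Adj u v

/-- The domination number. -/
noncomputable def domNumber {V : Type*} (G : SimpleGraph V) [Fintype V] : ℕ :=
  sInf {n | ∃ S : Set V, IsDomSet G S ∧ S.ncard = n}

/-- `f` is a `[k]`-Roman dominating function on `G`. -/
noncomputable def IsKRDF {V : Type*} (G : SimpleGraph V) [Fintype V] (k : ℕ) (f : V → ℕ) : Prop :=
  (∀ v, f v ≤ k + 1) ∧
  ∀ v : V, f v < k →
    f v + ∑ u ∈ univ.filter (fun u => G.Adj v u), f u ≥
      k + (univ.filter (fun u => G.Adj v u ∧ 0 < f u)).card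

/-- The `[k]`-Roman domination number. -/
noncomputable def kRoman {V : Type*} (G : SimpleGraph V) [Fintype V] (k : ℕ) : ℕ :=
  sInf {w | ∃ f : V → ℕ, IsKRDF G k f ∧ ∑ v, f v = w}

/-- `S` is a packing: closed neighborhoods of vertices in `S` are pairwise disjoint. -/
def IsPacking {V : Type*} (G : SimpleGraph V) (S : Set V) : Prop :=
  S.Pairwise fun u v => Disjoint (closedNbr G u) (closedNbr G v)

/-- The packing number. -/
noncomputable def packingNumber {V : Type*} (G : SimpleGraph V) [Fintype V] : ℕ :=
  sSup {n | ∃ S : Set V, IsPacking G S ∧ S.ncard = n}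

lemma cyc3_adj : ∀ a b : Fin 3, (cycleGraph 3).Adj a b ↔ a ≠ b := by
  intro a b; rw [cycleGraph_adj']; revert a b; decide

lemma mem_cn0 {n : ℕ} (a : Fin 3) (j : Fin n) (w : Fin 3 × Fin n) :
    w ∈ closedNbr ((cycleGraph 3).boxProd (pathGraph n)) (a, j) ↔
      w.2 = j ∨ (w.1 = a ∧ (w.2.val = j.val + 1 ∨ j.val = w.2.val + 1)) := by
  simp only [closedNbr, Set.mem_insert_iff, mem_neighborSet, boxProd_adj, pathGraph_adj,
    cyc3_adj, Prod.ext_iff]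
  constructor
  · rintro (⟨h1, h2⟩ | ⟨⟨h1, h2⟩ | ⟨h1, h2⟩⟩)
    · exact Or.inl h2
    · exact Or.inl h2.symm
    · exact Or.inr ⟨h2.symm, by omega⟩
  · rintro (h | ⟨h1, h2⟩)
    · by_cases hw : w.1 = a
      · exact Or.inl ⟨hw, h⟩
      · exact Or.inr (Or.inl ⟨fun he => hw he.symm, h.symm⟩)
    · exact Or.inr (Or.inr ⟨by omega, h1.symm⟩)

lemma mem_cn {n : ℕ} (u w : Fin 3 × Fin n) :
    w ∈ closedNbr ((cycleGraph 3).boxProd (pathGraph n)) u ↔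
      w.2 = u.2 ∨ (w.1 = u.1 ∧ (w.2.val = u.2.val + 1 ∨ u.2.val = w.2.val + 1)) :=
  mem_cn0 u.1 u.2 w

theorem stmt14 (n : ℕ) (hn : 1 ≤ n) :
    (packingNumber ((cycleGraph 3).boxProd (pathGraph n)) : ℤ) = ⌈(n : ℚ) / 2⌉ := by
  set m := (n + 1) / 2 with hm
  have hceil : ⌈(n : ℚ) / 2⌉ = (m : ℤ) := by
    obtain ⟨k, rfl | rfl⟩ := Nat.even_or_odd' n
    · rw [show ((2 * k : ℕ) : ℚ) / 2 = (k : ℚ) by push_cast; ring, Int.ceil_natCast]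
      simp only [hm]; omega
    · rw [show ((2 * k + 1 : ℕ) : ℚ) / 2 = 1 / 2 + (k : ℚ) by push_cast; ring,
        Int.ceil_add_natCast]
      rw [show ⌈(1:ℚ)/2⌉ = 1 by norm_num [Int.ceil_eq_iff]]
      simp only [hm]; omega
  -- gap lemma: packing vertices have path-coordinates at distance ≥ 2
  have gap : ∀ S : Set (Fin 3 × Fin n),
      IsPacking ((cycleGraph 3).boxProd (pathGraph n)) S →
      ∀ u ∈ S, ∀ v ∈ S, u ≠ v → u.2.val + 2 ≤ v.2.val ∨ v.2.val + 2 ≤ u.2.val := by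
    intro S hS u hu v hv huv
    by_contra hcon
    push_neg at hcon
    obtain ⟨hc1, hc2⟩ := hcon
    have hd := Set.disjoint_left.mp (hS hu hv huv)
    rcases lt_trichotomy u.2.val v.2.val with h | h | h
    · exact hd (a := (u.1, v.2)) ((mem_cn u _).mpr (Or.inr ⟨rfl,
        show v.2.val = u.2.val + 1 ∨ u.2.val = v.2.val + 1 by omega⟩))
        ((mem_cn v _).mpr (Or.inl rfl))
    · exact hd (a := u) ((mem_cn u u).mpr (Or.inl rfl))
        ((mem_cn v u).mpr (Or.inl (Fin.ext h)))
    · exact hd (a := (v.1, u.2)) ((mem_cn u _).mpr (Or.inl rfl))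
        ((mem_cn v _).mpr (Or.inr ⟨rfl,
          show u.2.val = v.2.val + 1 ∨ v.2.val = u.2.val + 1 by omega⟩))
  -- upper bound
  have hub : ∀ N ∈ {N | ∃ S : Set (Fin 3 × Fin n),
      IsPacking ((cycleGraph 3).boxProd (pathGraph n)) S ∧ S.ncard = N}, N ≤ m := by
    rintro N ⟨S, hS, rfl⟩
    have hle : S.ncard ≤ (↑(Finset.range m) : Set ℕ).ncard := by
      apply Set.ncard_le_ncard_of_injOn (fun u => u.2.val / 2)
      · intro u hu
        simp only [Finset.coe_range, Set.mem_Iio]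
        have := u.2.isLt
        simp only [hm]; omega
      · intro u hu v hv he
        have he' : u.2.val / 2 = v.2.val / 2 := he
        by_contra hne
        rcases gap S hS u hu v hv hne with h | h <;> omega
    rwa [Set.ncard_coe_finset, Finset.card_range] at hle
  -- lower bound: explicit packing
  have h3 : (0 : ℕ) < 3 := by omega
  let f : ℕ → Fin 3 × Fin n := fun i => (⟨i % 3, Nat.mod_lt _ h3⟩, ⟨2 * i % n, Nat.mod_lt _ (by omega)⟩)
  have hfval : ∀ i < m, (f i).2.val = 2 * i := by
    intro i hi
    show 2 * i % n = 2 * i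
    apply Nat.mod_eq_of_lt
    simp only [hm] at hi; omega
  have hf1 : ∀ i, (f i).1.val = i % 3 := fun i => rfl
  have hmem : m ∈ {N | ∃ S : Set (Fin 3 × Fin n),
      IsPacking ((cycleGraph 3).boxProd (pathGraph n)) S ∧ S.ncard = N} := by
    have hinj : Set.InjOn f ↑(Finset.range m) := by
      intro i hi i' hi' he
      simp only [Finset.mem_coe, Finset.mem_range] at hi hi'
      have h1 := hfval i hi
      have h2 := hfval i' hi'
      rw [he] at h1
      omega
    refine ⟨↑((Finset.range m).image f), ?_, ?_⟩
    · rintro u hu v hv huv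
      simp only [Finset.coe_image, Finset.coe_range, Set.mem_image, Set.mem_Iio] at hu hv
      obtain ⟨i, hi, rfl⟩ := hu
      obtain ⟨i', hi', rfl⟩ := hv
      rw [Set.disjoint_left]
      intro w hw hw'
      rw [mem_cn] at hw hw'
      have hne : i ≠ i' := fun h => huv (by rw [h])
      have h1 := hfval i hi
      have h1' := hfval i' hi'
      have c1 : w.2.val = 2 * i ∨
          (w.1.val = i % 3 ∧ (w.2.val = 2 * i + 1 ∨ 2 * i = w.2.val + 1)) := by
        rcases hw with h | ⟨ha, h⟩
        · exact Or.inl (by rw [congrArg Fin.val h, h1])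
        · exact Or.inr ⟨by rw [congrArg Fin.val ha, hf1], by omega⟩
      have c2 : w.2.val = 2 * i' ∨
          (w.1.val = i' % 3 ∧ (w.2.val = 2 * i' + 1 ∨ 2 * i' = w.2.val + 1)) := by
        rcases hw' with h | ⟨ha, h⟩
        · exact Or.inl (by rw [congrArg Fin.val h, h1'])
        · exact Or.inr ⟨by rw [congrArg Fin.val ha, hf1], by omega⟩
      omega
    · rw [Set.ncard_coe_finset, Finset.card_image_of_injOn hinj, Finset.card_range]
  have hps : packingNumber ((cycleGraph 3).boxProd (pathGraph n)) = m :=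
    le_antisymm (csSup_le ⟨m, hmem⟩ hub) (le_csSup ⟨m, hub⟩ hmem)
  rw [hps, hceil]
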